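/- Define F(t,r) = (1 + r cos t)/(r² + 4r cos t + 4)^{3/2} + (1 − r cos t)/(r² − 4r cos t + 4)^{3/2}. Then F is strictly decreasing in r: for all t ∈ [0, π) and all 0 < r₁ < r₂ < 2, F(t, r₁) > F(t, r₂). Equivalently, ∂F/∂r(t,r) < 0 for all t ∈ [0, π) and r ∈ (0, 2). -/
import Mathlib

set_option maxHeartbeats 1000000

lemma VX (x y : ℝ) (hx0 : 0 ≤ x) (hx4 : x < 4) (hy0 : 0 ≤ y) (hy1 : y ≤ 1) :
    0 < 96 - 64*y + 48*x - 32*x*y + 64*x*y^2 + 6*x^2 - 28*x^2*y := by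
  nlinarith [mul_nonneg hx0 (sub_nonneg.2 hy1), mul_nonneg (mul_nonneg hx0 hx0) (sub_nonneg.2 hy1),
    sq_nonneg (x*y - x), sq_nonneg (x*y), mul_nonneg hx0 hy0, sq_nonneg (y-1), sq_nonneg (x-4),
    mul_nonneg (mul_nonneg hx0 hy0) hy0, mul_pos (sub_pos.2 hx4) (sub_pos.2 hx4)]

lemma UX (x y : ℝ) (hx0 : 1/4 ≤ x) (hx4 : x ≤ 4) (hy0 : 0 ≤ y) (hy1 : y ≤ 1) :
    0 ≤ 384 - 512*y + 288*x + 192*x*y + 512*x*y^2 + 72*x^2 - 96*x^2*y - 64*x^2*y^2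
      + 6*x^3 - 44*x^3*y := by
  nlinarith [mul_nonneg (sub_nonneg.2 hx4) (sub_nonneg.2 hy1), sq_nonneg (x*y-x), sq_nonneg (x-4),
    mul_nonneg (mul_nonneg (sub_nonneg.2 hx4) (sub_nonneg.2 hy1)) hy0,
    mul_nonneg (mul_nonneg (sub_nonneg.2 hx4) (sub_nonneg.2 hy1)) (sub_nonneg.2 (by linarith : (1:ℝ)/4 ≤ x)),
    mul_nonneg (mul_nonneg hy0 hy0) (sub_nonneg.2 hx4), sq_nonneg (y-1), sq_nonneg (x*y-4),
    mul_nonneg (sub_nonneg.2 hy1) (sub_nonneg.2 hy1)]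

lemma WX1 (x y : ℝ) (hx0 : 0 < x) (hx4 : x ≤ 1/4) (hy0 : 0 ≤ y) (hy1 : y ≤ 1) :
    0 < (1-y)*(3072-4608*x) + 5120*x*y^2 - 15600*x^2 := by
  nlinarith [mul_pos hx0 hx0, sq_nonneg (y - 3/4), mul_nonneg (sub_nonneg.2 hy1) (sub_nonneg.2 hx4),
    mul_pos hx0 (mul_pos hx0 hx0), sq_nonneg (x*(y-3/4)), mul_nonneg hx0.le (sq_nonneg (y-3/4)),
    mul_nonneg (sub_nonneg.2 hx4) (sq_nonneg (y-3/4)), mul_nonneg (mul_nonneg hx0.le hy0) (sub_nonneg.2 hy1)]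

lemma WX2 (x y : ℝ) (hx0 : 0 ≤ x) (hx4 : x ≤ 1/4) (hy0 : 0 ≤ y) (hy1 : y ≤ 1) :
    0 ≤ (9840+1920*y-10240*y^2-1024*y^3) + x*(-1920+3840*y-2304*y^2+2560*y^3-1024*y^4)
      + x^2*(-180+1620*y-640*y^2+896*y^3) + x^3*(18+102*y-340*y^2) + x^4*(3-18*y) := by
  nlinarith [mul_nonneg (sub_nonneg.2 hy1) (mul_nonneg hy0 hy0),
    mul_nonneg (sub_nonneg.2 hy1) hy0, mul_nonneg (sub_nonneg.2 hx4) hy0,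
    mul_nonneg (mul_nonneg hx0 hx0) (sub_nonneg.2 hx4),
    mul_nonneg (mul_nonneg (mul_nonneg hx0 hx0) hx0) (sub_nonneg.2 hx4),
    mul_nonneg hx0 (sub_nonneg.2 hx4), mul_nonneg hy0 hy0,
    mul_nonneg (mul_nonneg hx0 hy0) (sub_nonneg.2 hy1),
    mul_nonneg (mul_nonneg (mul_nonneg hx0 hx0) hy0) (sub_nonneg.2 hy1),
    mul_nonneg (mul_nonneg hx0 hy0) hy0]

lemma WX (x y : ℝ) (hx0 : 0 < x) (hx4 : x ≤ 1/4) (hy0 : 0 < y) (hy1 : y ≤ 1) :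
    0 < 3072 - 3072*y + (-4608+4608*y+5120*y^2)*x + (-5760+1920*y-10240*y^2-1024*y^3)*x^2
      + (-1920+3840*y-2304*y^2+2560*y^3-1024*y^4)*x^3 + (-180+1620*y-640*y^2+896*y^3)*x^4
      + (18+102*y-340*y^2)*x^5 + (3-18*y)*x^6 := by
  have h1 := WX1 x y hx0 hx4 hy0.le hy1
  have h2 := WX2 x y hx0.le hx4 hy0.le hy1
  nlinarith [mul_nonneg (mul_nonneg hx0.le hx0.le) h2]

lemma core (r c a b : ℝ) (hr0 : 0 < r) (hr2 : r < 2) (hc1 : c^2 ≤ 1)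
    (ha : 0 < a) (hb : 0 < b)
    (ha2 : a^2 = r^2 + 4*r*c + 4) (hb2 : b^2 = r^2 - 4*r*c + 4) :
    (c*(r^2+4*r*c+4) - 3*((1+r*c)*(r+2*c))) * ((r^2-4*r*c+4)^2*b)
      + (-(c*(r^2-4*r*c+4)) - 3*((1-r*c)*(r-2*c))) * ((r^2+4*r*c+4)^2*a) < 0 := by
  have h4 : r^2 < 4 := by nlinarith
  have hV : 0 < 96 - 64*c^2 + 48*r^2 - 32*r^2*c^2 + 64*r^2*c^4 + 6*r^4 - 28*r^4*c^2 := by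
    nlinarith [VX (r^2) (c^2) (sq_nonneg r) h4 (sq_nonneg c) hc1]
  have hp : 0 < a*b := mul_pos ha hb
  have hp2 : (a*b)^2 = (r^2+4*r*c+4)*(r^2-4*r*c+4) := by rw [mul_pow, ha2, hb2]
  have hT : 0 < (384 - 512*c^2 + 288*r^2 + 192*r^2*c^2 + 512*r^2*c^4 + 72*r^4 - 96*r^4*c^2
      - 64*r^4*c^4 + 6*r^6 - 44*r^6*c^2)
      + a*b*(96 - 64*c^2 + 48*r^2 - 32*r^2*c^2 + 64*r^2*c^4 + 6*r^4 - 28*r^4*c^2) := by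
    rcases le_or_gt 0 (384 - 512*c^2 + 288*r^2 + 192*r^2*c^2 + 512*r^2*c^4 + 72*r^4 - 96*r^4*c^2
      - 64*r^4*c^4 + 6*r^6 - 44*r^6*c^2) with hU | hU
    · nlinarith [mul_pos hp hV]
    · have hc0 : 0 < c^2 := by
        rcases eq_or_lt_of_le (sq_nonneg c) with h0 | h0
        · exfalso
          have hcz : c = 0 := by
            have h00 : c^2 = 0 := h0.symm
            exact pow_eq_zero_iff (by norm_num : (2:ℕ) ≠ 0) |>.1 h00
          rw [hcz] at hU
          nlinarith [hU, sq_nonneg r, sq_nonneg (r^2), sq_nonneg (r^3)]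
        · exact h0
      have hr12 : r < 1/2 := by
        by_contra hh
        push_neg at hh
        have hx0 : (1:ℝ)/4 ≤ r^2 := by nlinarith
        have := UX (r^2) (c^2) hx0 h4.le (sq_nonneg c) hc1
        nlinarith [this, hU]
      have hx4 : r^2 ≤ 1/4 := by nlinarith
      have hW := WX (r^2) (c^2) (by positivity) hx4 hc0 hc1
      have habV : 0 < a*b*(96 - 64*c^2 + 48*r^2 - 32*r^2*c^2 + 64*r^2*c^4 + 6*r^4 - 28*r^4*c^2) :=
        mul_pos hp hV
      have hsq : (-(384 - 512*c^2 + 288*r^2 + 192*r^2*c^2 + 512*r^2*c^4 + 72*r^4 - 96*r^4*c^2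
          - 64*r^4*c^4 + 6*r^6 - 44*r^6*c^2))^2
          < (a*b*(96 - 64*c^2 + 48*r^2 - 32*r^2*c^2 + 64*r^2*c^4 + 6*r^4 - 28*r^4*c^2))^2 := by
        have e : (a*b*(96 - 64*c^2 + 48*r^2 - 32*r^2*c^2 + 64*r^2*c^4 + 6*r^4 - 28*r^4*c^2))^2
            = ((r^2+4*r*c+4)*(r^2-4*r*c+4))
              * (96 - 64*c^2 + 48*r^2 - 32*r^2*c^2 + 64*r^2*c^4 + 6*r^4 - 28*r^4*c^2)^2 := by
          rw [mul_pow, hp2]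
        rw [e]
        nlinarith [mul_pos hc0 hW]
      have := lt_of_pow_lt_pow_left₀ 2 habV.le hsq
      linarith
  have hab : 0 < a + b := by linarith
  have hId : ((c*(r^2+4*r*c+4) - 3*((1+r*c)*(r+2*c))) * ((r^2-4*r*c+4)^2*b)
      + (-(c*(r^2-4*r*c+4)) - 3*((1-r*c)*(r-2*c))) * ((r^2+4*r*c+4)^2*a)) * (a+b)
      = -(r*((384 - 512*c^2 + 288*r^2 + 192*r^2*c^2 + 512*r^2*c^4 + 72*r^4 - 96*r^4*c^2
        - 64*r^4*c^4 + 6*r^6 - 44*r^6*c^2)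
        + a*b*(96 - 64*c^2 + 48*r^2 - 32*r^2*c^2 + 64*r^2*c^4 + 6*r^4 - 28*r^4*c^2))) := by
    linear_combination ((-(c*(r^2-4*r*c+4)) - 3*((1-r*c)*(r-2*c))) * (r^2+4*r*c+4)^2) * ha2
      + ((c*(r^2+4*r*c+4) - 3*((1+r*c)*(r+2*c))) * (r^2-4*r*c+4)^2) * hb2
  by_contra hcon
  push_neg at hcon
  have h5 := mul_nonneg hcon hab.le
  have h6 := mul_pos hr0 hT
  linarith [h5, h6, hId.ge, hId.le]

lemma core_div (r c a b : ℝ) (hr0 : 0 < r) (hr2 : r < 2) (hc1 : c^2 ≤ 1)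
    (ha : 0 < a) (hb : 0 < b)
    (ha2 : a^2 = r^2 + 4*r*c + 4) (hb2 : b^2 = r^2 - 4*r*c + 4) :
    (c*(r^2+4*r*c+4) - 3*((1+r*c)*(r+2*c))) / a^5
      + (-(c*(r^2-4*r*c+4)) - 3*((1-r*c)*(r-2*c))) / b^5 < 0 := by
  have ha5 : (0:ℝ) < a^5 := by positivity
  have hb5 : (0:ℝ) < b^5 := by positivity
  have hnum := core r c a b hr0 hr2 hc1 ha hb ha2 hb2
  have e5a : a^5 = (r^2+4*r*c+4)^2*a := by rw [← ha2]; ring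
  have e5b : b^5 = (r^2-4*r*c+4)^2*b := by rw [← hb2]; ring
  rw [div_add_div _ _ ha5.ne' hb5.ne']
  apply div_neg_of_neg_of_pos
  · rw [e5a, e5b]; nlinarith [hnum]
  · positivity

lemma hasDeriv_aux (c r : ℝ) (hcm : -1 ≤ c) (hcM : c ≤ 1) (hr0 : 0 < r) (hr2 : r < 2) :
    ∃ D, D < 0 ∧ HasDerivAt (fun s : ℝ =>
      (1 + s*c)/((s^2+4*s*c+4)^((3:ℝ)/2)) + (1 - s*c)/((s^2-4*s*c+4)^((3:ℝ)/2))) D r := by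
  have hA : 0 < r^2+4*r*c+4 := by
    nlinarith [mul_pos (sub_pos.2 hr2) (sub_pos.2 hr2),
      mul_nonneg hr0.le (by linarith : (0:ℝ) ≤ c+1)]
  have hB : 0 < r^2-4*r*c+4 := by
    nlinarith [mul_pos (sub_pos.2 hr2) (sub_pos.2 hr2),
      mul_nonneg hr0.le (by linarith : (0:ℝ) ≤ 1-c)]
  have hA32 : 0 < (r^2+4*r*c+4)^((3:ℝ)/2) := Real.rpow_pos_of_pos hA _
  have hB32 : 0 < (r^2-4*r*c+4)^((3:ℝ)/2) := Real.rpow_pos_of_pos hB _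
  have hn1 : HasDerivAt (fun s : ℝ => 1 + s*c) c r := by
    simpa using ((hasDerivAt_id r).mul_const c).const_add 1
  have hn2 : HasDerivAt (fun s : ℝ => 1 - s*c) (-c) r := by
    simpa using ((hasDerivAt_id r).mul_const c).const_sub 1
  have hq1 : HasDerivAt (fun s : ℝ => s^2+4*s*c+4) (2*r+4*c) r := by
    have h := ((hasDerivAt_pow 2 r).add
      (((hasDerivAt_id r).const_mul 4).mul_const c)).add_const 4
    simpa using h
  have hq2 : HasDerivAt (fun s : ℝ => s^2-4*s*c+4) (2*r-4*c) r := by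
    have h := ((hasDerivAt_pow 2 r).sub
      (((hasDerivAt_id r).const_mul 4).mul_const c)).add_const 4
    simpa using h
  have hd1 := hq1.rpow_const (p := (3:ℝ)/2) (Or.inl hA.ne')
  have hd2 := hq2.rpow_const (p := (3:ℝ)/2) (Or.inl hB.ne')
  have hF1 := hn1.div hd1 hA32.ne'
  have hF2 := hn2.div hd2 hB32.ne'
  refine ⟨_, ?_, hF1.add hF2⟩
  show (c * ((r^2+4*r*c+4)^((3:ℝ)/2)) - (1+r*c) * ((2*r+4*c) * ((3:ℝ)/2) * (r^2+4*r*c+4)^((3:ℝ)/2-1)))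
        / ((r^2+4*r*c+4)^((3:ℝ)/2))^2
      + ((-c) * ((r^2-4*r*c+4)^((3:ℝ)/2)) - (1-r*c) * ((2*r-4*c) * ((3:ℝ)/2) * (r^2-4*r*c+4)^((3:ℝ)/2-1)))
        / ((r^2-4*r*c+4)^((3:ℝ)/2))^2 < 0
  have ha : 0 < Real.sqrt (r^2+4*r*c+4) := Real.sqrt_pos.2 hA
  have hb : 0 < Real.sqrt (r^2-4*r*c+4) := Real.sqrt_pos.2 hB
  have ha2 : (Real.sqrt (r^2+4*r*c+4))^2 = r^2+4*r*c+4 := Real.sq_sqrt hA.le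
  have hb2 : (Real.sqrt (r^2-4*r*c+4))^2 = r^2-4*r*c+4 := Real.sq_sqrt hB.le
  have e3A : (r^2+4*r*c+4)^((3:ℝ)/2) = (Real.sqrt (r^2+4*r*c+4))^3 := by
    rw [show ((3:ℝ)/2) = (1/2)*3 by norm_num, Real.rpow_mul hA.le, ← Real.sqrt_eq_rpow,
      show ((3:ℝ)) = ((3:ℕ):ℝ) by norm_num, Real.rpow_natCast]
  have e3B : (r^2-4*r*c+4)^((3:ℝ)/2) = (Real.sqrt (r^2-4*r*c+4))^3 := by
    rw [show ((3:ℝ)/2) = (1/2)*3 by norm_num, Real.rpow_mul hB.le, ← Real.sqrt_eq_rpow,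
      show ((3:ℝ)) = ((3:ℕ):ℝ) by norm_num, Real.rpow_natCast]
  have e1A : (r^2+4*r*c+4)^((3:ℝ)/2-1) = Real.sqrt (r^2+4*r*c+4) := by
    rw [show ((3:ℝ)/2-1) = 1/2 by norm_num, ← Real.sqrt_eq_rpow]
  have e1B : (r^2-4*r*c+4)^((3:ℝ)/2-1) = Real.sqrt (r^2-4*r*c+4) := by
    rw [show ((3:ℝ)/2-1) = 1/2 by norm_num, ← Real.sqrt_eq_rpow]
  rw [e3A, e3B, e1A, e1B]
  have hnum1 : c * ((Real.sqrt (r^2+4*r*c+4))^3)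
        - (1+r*c) * ((2*r+4*c) * ((3:ℝ)/2) * Real.sqrt (r^2+4*r*c+4))
      = (c*(r^2+4*r*c+4) - 3*((1+r*c)*(r+2*c))) * Real.sqrt (r^2+4*r*c+4) := by
    linear_combination (c * Real.sqrt (r^2+4*r*c+4)) * ha2
  have hnum2 : (-c) * ((Real.sqrt (r^2-4*r*c+4))^3)
        - (1-r*c) * ((2*r-4*c) * ((3:ℝ)/2) * Real.sqrt (r^2-4*r*c+4))
      = (-(c*(r^2-4*r*c+4)) - 3*((1-r*c)*(r-2*c))) * Real.sqrt (r^2-4*r*c+4) := by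
    linear_combination ((-c) * Real.sqrt (r^2-4*r*c+4)) * hb2
  rw [hnum1, hnum2,
    show ((Real.sqrt (r^2+4*r*c+4))^3)^2 = (Real.sqrt (r^2+4*r*c+4))^5 * Real.sqrt (r^2+4*r*c+4) from by ring,
    show ((Real.sqrt (r^2-4*r*c+4))^3)^2 = (Real.sqrt (r^2-4*r*c+4))^5 * Real.sqrt (r^2-4*r*c+4) from by ring,
    mul_div_mul_right _ _ ha.ne', mul_div_mul_right _ _ hb.ne']
  exact core_div r c _ _ hr0 hr2 (by nlinarith) ha hb ha2 hb2

/-- The coefficient of the linearization of the curved Sitnikov problem (with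
circular primaries, `ε = 0`, `R = 1`) at the equilibrium `q = π`:
`F(t,r) = (1 + r cos t)/(r² + 4r cos t + 4)^{3/2} + (1 - r cos t)/(r² - 4r cos t + 4)^{3/2}`. -/
noncomputable def F (t r : ℝ) : ℝ :=
  (1 + r * Real.cos t) / (r ^ 2 + 4 * r * Real.cos t + 4) ^ ((3 : ℝ) / 2) +
    (1 - r * Real.cos t) / (r ^ 2 - 4 * r * Real.cos t + 4) ^ ((3 : ℝ) / 2)

lemma hasD (t r : ℝ) (h0 : 0 < r) (h2 : r < 2) :
    ∃ D, D < 0 ∧ HasDerivAt (fun s => F t s) D r := by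
  unfold F
  exact hasDeriv_aux (Real.cos t) r (Real.neg_one_le_cos t) (Real.cos_le_one t) h0 h2

/-- Lemma 4.1: `F(t,r)` is strictly decreasing in `r ∈ (0,2)` for each
`t ∈ [0,π)`; equivalently, `∂F/∂r(t,r) < 0` there. -/
theorem F_strict_decreasing_in_r :
    (∀ t ∈ Set.Ico (0 : ℝ) Real.pi, ∀ r₁ r₂ : ℝ, 0 < r₁ → r₁ < r₂ → r₂ < 2 →
      F t r₁ > F t r₂) ∧
    (∀ t ∈ Set.Ico (0 : ℝ) Real.pi, ∀ r ∈ Set.Ioo (0 : ℝ) 2,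
      deriv (fun r => F t r) r < 0) := by
  constructor
  · intro t ht r₁ r₂ h1 h12 h22
    have hanti : StrictAntiOn (fun r => F t r) (Set.Icc r₁ r₂) := by
      apply strictAntiOn_of_deriv_neg (convex_Icc _ _)
      · intro s hs
        obtain ⟨D, hD, h⟩ := hasD t s (h1.trans_le hs.1) (lt_of_le_of_lt hs.2 h22)
        exact h.continuousAt.continuousWithinAt
      · rw [interior_Icc]
        intro s hs
        obtain ⟨D, hD, h⟩ := hasD t s (h1.trans hs.1) (hs.2.trans h22)
        rw [h.deriv]
        exact hD
    exact hanti ⟨le_rfl, h12.le⟩ ⟨h12.le, le_rfl⟩ h12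
  · intro t ht r hr
    obtain ⟨D, hD, h⟩ := hasD t r hr.1 hr.2
    rw [h.deriv]
    exact hD
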